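/- Let x_1,…,x_n ∈ ℝ^{d+1} each have norm √(d+1), with no two parallel, and define H ∈ ℝ^{n×n} by H_{ij} = x_i^T x_j · (π − arccos(x_i^T x_j/(d+1)))/(2π). Then H is symmetric positive definite. -/

import Mathlib

open Real Finset Filter Topology

namespace NTKAux

noncomputable def b (k : ℕ) : ℝ := (Nat.centralBinom k : ℝ) / 4 ^ k

lemma b_zero : b 0 = 1 := by simp [b]

lemma b_pos (k : ℕ) : 0 < b k := by
  have h : (0:ℝ) < (Nat.centralBinom k : ℝ) := by exact_mod_cast Nat.centralBinom_pos k
  exact div_pos h (by positivity)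

lemma b_rec (k : ℕ) : 2 * ((k:ℝ) + 1) * b (k+1) = (2 * (k:ℝ) + 1) * b k := by
  have h' : ((k:ℝ)+1) * (Nat.centralBinom (k+1) : ℝ)
      = 2*(2*(k:ℝ)+1)*(Nat.centralBinom k : ℝ) := by exact_mod_cast Nat.succ_mul_centralBinom_succ k
  unfold b
  rw [pow_succ]
  have h4 : (4:ℝ) ^ k ≠ 0 := by positivity
  field_simp
  linear_combination 2 * h'

lemma b_le_one (k : ℕ) : b k ≤ 1 := by
  induction k with
  | zero => simp [b_zero]
  | succ k ih =>
    have hr := b_rec k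
    nlinarith [b_pos k, b_pos (k+1)]


noncomputable def P (K : ℕ) (u : ℝ) : ℝ := ∑ k ∈ range K, b k * u ^ k
noncomputable def S (K : ℕ) (u : ℝ) : ℝ := ∑ k ∈ range K, ((k:ℝ) + 1/2) * b k * u ^ k

lemma P_zero_eq (K : ℕ) : P (K+1) 0 = 1 := by
  unfold P
  rw [Finset.sum_eq_single 0]
  · simp [b_zero]
  · intro k _ hk; simp [zero_pow hk]
  · simp

lemma hasDerivAt_P (K : ℕ) (u : ℝ) : HasDerivAt (fun v => P (K+1) v) (S K u) u := by
  have h : HasDerivAt (fun v => P (K+1) v)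
      (∑ k ∈ range (K+1), b k * ((k:ℕ) * u ^ (k-1))) u := by
    apply HasDerivAt.fun_sum
    intro k _
    exact (hasDerivAt_pow k u).const_mul (b k)
  convert h using 1
  rw [Finset.sum_range_succ']
  simp only [Nat.cast_zero, zero_mul, mul_zero, add_zero, Nat.cast_succ, Nat.add_sub_cancel]
  apply Finset.sum_congr rfl
  intro k _
  have h2 := b_rec k
  linear_combination (-(u^k)/2) * h2

lemma key_identity (K : ℕ) (u : ℝ) :
    (1 - u) * S K u - (1/2) * P (K+1) u = -(((K:ℝ) + 1/2) * b K * u ^ K) := by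
  induction K with
  | zero => simp [S, P, b_zero]
  | succ K ih =>
    have hS : S (K+1) u = S K u + ((K:ℝ) + 1/2) * b K * u ^ K := by
      unfold S; rw [Finset.sum_range_succ]
    have hP : P (K+2) u = P (K+1) u + b (K+1) * u ^ (K+1) := by
      unfold P; rw [Finset.sum_range_succ]
    rw [hS, hP]
    push_cast
    linear_combination ih + u^(K+1)/2 * b_rec K


lemma deriv_bound_aux {f f' : ℝ → ℝ} {x m M : ℝ} (hx : 0 ≤ x)
    (hd : ∀ u ∈ Set.Icc 0 x, HasDerivAt f (f' u) u)
    (hm : ∀ u ∈ Set.Icc 0 x, m ≤ f' u)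
    (hM : ∀ u ∈ Set.Icc 0 x, f' u ≤ M) :
    f 0 + m * x ≤ f x ∧ f x ≤ f 0 + M * x := by
  have hx0 : (0:ℝ) ∈ Set.Icc 0 x := by constructor <;> simp [hx]
  have hxx : x ∈ Set.Icc 0 x := by constructor <;> simp [hx]
  have hint : interior (Set.Icc 0 x) ⊆ Set.Icc 0 x := interior_subset
  constructor
  · -- use g = f - m * id monotone
    have hg : ∀ u ∈ Set.Icc 0 x, HasDerivAt (fun v => f v - m * v) (f' u - m) u := by
      intro u hu
      simpa using (hd u hu).fun_sub ((hasDerivAt_id u).const_mul m)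
    have hmono : MonotoneOn (fun v => f v - m * v) (Set.Icc 0 x) := by
      apply monotoneOn_of_deriv_nonneg (convex_Icc 0 x)
      · intro u hu; exact ((hg u hu).continuousAt).continuousWithinAt
      · intro u hu; exact ((hg u (hint hu)).differentiableAt).differentiableWithinAt
      · intro u hu
        rw [(hg u (hint hu)).deriv]
        have := hm u (hint hu); linarith
    have := hmono hx0 hxx hx
    simp only at this
    linarith
  · have hg : ∀ u ∈ Set.Icc 0 x, HasDerivAt (fun v => M * v - f v) (M - f' u) u := by
      intro u hu
      simpa using ((hasDerivAt_id u).const_mul M).fun_sub (hd u hu)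
    have hmono : MonotoneOn (fun v => M * v - f v) (Set.Icc 0 x) := by
      apply monotoneOn_of_deriv_nonneg (convex_Icc 0 x)
      · intro u hu; exact ((hg u hu).continuousAt).continuousWithinAt
      · intro u hu; exact ((hg u (hint hu)).differentiableAt).differentiableWithinAt
      · intro u hu
        rw [(hg u (hint hu)).deriv]
        have := hM u (hint hu); linarith
    have := hmono hx0 hxx hx
    simp only at this
    linarith


lemma hasDerivAt_h (K : ℕ) {u : ℝ} (hu : u < 1) :
    HasDerivAt (fun v => P (K+1) v * √(1 - v))
      (-(((K:ℝ)+1/2) * b K * u ^ K / √(1 - u))) u := by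
  have hpos : 0 < 1 - u := by linarith
  have hne : (1 - u) ≠ 0 := ne_of_gt hpos
  have hs : √(1 - u) ≠ 0 := by positivity
  have h1 : HasDerivAt (fun v : ℝ => 1 - v) (-1) u := by
    simpa using (hasDerivAt_id u).const_sub 1
  have h2 : HasDerivAt (fun v => √(1 - v)) (1 / (2 * √(1 - u)) * (-1)) u :=
    (Real.hasDerivAt_sqrt hne).comp u h1
  have h3 := (hasDerivAt_P K u).fun_mul h2
  refine h3.congr_deriv (Eq.symm ?_)
  have hs2 : √(1 - u) * √(1 - u) = 1 - u := Real.mul_self_sqrt hpos.le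
  have hk := key_identity K u
  have h2s : (2 * √(1 - u)) ≠ 0 := by positivity
  apply mul_right_cancel₀ h2s
  have e1 : (S K u * √(1 - u) + P (K+1) u * (1 / (2 * √(1 - u)) * -1)) * (2 * √(1 - u))
      = 2 * S K u * (1 - u) - P (K+1) u := by
    field_simp; linear_combination 2 * S K u * hs2
  have e2 : (-(((K:ℝ)+1/2) * b K * u ^ K / √(1 - u))) * (2 * √(1 - u))
      = -(2 * (((K:ℝ)+1/2) * b K * u ^ K)) := by
    field_simp
  rw [e1, e2]
  linarith [hk]

lemma P_bounds (K : ℕ) {x u : ℝ} (hx0 : 0 ≤ x) (hx1 : x < 1) (hu0 : 0 ≤ u) (hux : u ≤ x) :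
    1 - ((K:ℝ)+1/2) * b K * x ^ K / √(1 - x) ≤ P (K+1) u * √(1 - u) ∧
      P (K+1) u * √(1 - u) ≤ 1 := by
  set M : ℝ := ((K:ℝ)+1/2) * b K * x ^ K / √(1 - x) with hM
  have hsx : 0 < √(1 - x) := Real.sqrt_pos.mpr (by linarith)
  have hMnn : 0 ≤ M := by
    have := b_pos K
    have : (0:ℝ) ≤ ((K:ℝ)+1/2) * b K * x ^ K := by positivity
    positivity
  have hd : ∀ v ∈ Set.Icc 0 u, HasDerivAt (fun w => P (K+1) w * √(1 - w))
      (-(((K:ℝ)+1/2) * b K * v ^ K / √(1 - v))) v := by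
    intro v hv
    exact hasDerivAt_h K (by rcases hv with ⟨_, hv2⟩; linarith)
  have hbnd : ∀ v ∈ Set.Icc 0 u, -M ≤ -(((K:ℝ)+1/2) * b K * v ^ K / √(1 - v)) ∧
      -(((K:ℝ)+1/2) * b K * v ^ K / √(1 - v)) ≤ 0 := by
    intro v hv
    rcases hv with ⟨hv0, hvu⟩
    have hv1 : v ≤ x := le_trans hvu hux
    have hsv : √(1 - x) ≤ √(1 - v) := Real.sqrt_le_sqrt (by linarith)
    have hsv0 : 0 < √(1 - v) := lt_of_lt_of_le hsx hsv
    have hbK := (b_pos K).le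
    have hnum : ((K:ℝ)+1/2) * b K * v ^ K ≤ ((K:ℝ)+1/2) * b K * x ^ K := by
      have : v ^ K ≤ x ^ K := pow_le_pow_left₀ hv0 hv1 K
      have h0 : (0:ℝ) ≤ ((K:ℝ)+1/2) * b K := by positivity
      nlinarith
    have hnum0 : (0:ℝ) ≤ ((K:ℝ)+1/2) * b K * v ^ K := by positivity
    constructor
    · rw [neg_le_neg_iff, hM]
      have h0x : (0:ℝ) ≤ ((K:ℝ)+1/2) * b K * x ^ K := le_trans hnum0 hnum
      exact div_le_div₀ h0x hnum hsx hsv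
    · have : (0:ℝ) ≤ ((K:ℝ)+1/2) * b K * v ^ K / √(1 - v) := by positivity
      linarith
  have := deriv_bound_aux hu0 hd (fun v hv => (hbnd v hv).1) (fun v hv => (hbnd v hv).2)
  rcases this with ⟨hlow, hhigh⟩
  rw [P_zero_eq K] at hlow hhigh
  norm_num at hlow hhigh
  constructor
  · have hMu : M * u ≤ M * 1 := by nlinarith [hux, hx1]
    nlinarith
  · linarith

noncomputable def c (k : ℕ) : ℝ := b k / (2 * k + 1)
noncomputable def Q (K : ℕ) (y : ℝ) : ℝ := ∑ k ∈ range K, c k * y ^ (2 * k + 1)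

lemma c_pos (k : ℕ) : 0 < c k := by
  have := b_pos k
  have h2 : (0:ℝ) < 2 * k + 1 := by positivity
  exact div_pos this h2

lemma Q_zero (K : ℕ) : Q K 0 = 0 := by
  unfold Q
  apply Finset.sum_eq_zero
  intro k _
  simp

lemma hasDerivAt_Q (K : ℕ) (y : ℝ) : HasDerivAt (fun z => Q (K+1) z) (P (K+1) (y^2)) y := by
  have h : HasDerivAt (fun z => Q (K+1) z)
      (∑ k ∈ range (K+1), c k * ((2*k+1 : ℕ) * y ^ (2*k+1-1))) y := by
    apply HasDerivAt.fun_sum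
    intro k _
    exact (hasDerivAt_pow (2*k+1) y).const_mul (c k)
  convert h using 1
  unfold P
  apply Finset.sum_congr rfl
  intro k _
  have h1 : 2*k+1-1 = 2*k := by omega
  rw [h1]
  have h2 : (y^2)^k = y^(2*k) := by rw [← pow_mul]
  rw [h2]
  unfold c
  have h3 : ((2*k+1 : ℕ) : ℝ) = 2*(k:ℝ)+1 := by push_cast; ring
  rw [h3]
  have h4 : (2*(k:ℝ)+1) ≠ 0 := by positivity
  field_simp

lemma arcsin_est (K : ℕ) {y : ℝ} (hy0 : 0 ≤ y) (hy1 : y < 1) :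
    0 ≤ arcsin y - Q (K+1) y ∧
      arcsin y - Q (K+1) y ≤ ((K:ℝ)+1/2) * b K * (y^2) ^ K / (1 - y^2) := by
  have hx0 : (0:ℝ) ≤ y^2 := sq_nonneg y
  have hx1 : y^2 < 1 := by nlinarith
  have hsx : 0 < √(1 - y^2) := Real.sqrt_pos.mpr (by linarith)
  set M : ℝ := (((K:ℝ)+1/2) * b K * (y^2) ^ K / √(1 - y^2)) / √(1 - y^2) with hMdef
  have hd : ∀ s ∈ Set.Icc 0 y, HasDerivAt (fun z => arcsin z - Q (K+1) z)
      (1 / √(1 - s^2) - P (K+1) (s^2)) s := by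
    intro s hs
    rcases hs with ⟨hs0, hsy⟩
    have hs1 : s ≠ 1 := by intro h; rw [h] at hsy; linarith
    have hsm1 : s ≠ -1 := by intro h; rw [h] at hs0; linarith
    exact (Real.hasDerivAt_arcsin hsm1 hs1).sub (hasDerivAt_Q K s)
  have hbnd : ∀ s ∈ Set.Icc 0 y, 0 ≤ 1 / √(1 - s^2) - P (K+1) (s^2) ∧
      1 / √(1 - s^2) - P (K+1) (s^2) ≤ M := by
    intro s hs
    rcases hs with ⟨hs0, hsy⟩
    have hss : s^2 ≤ y^2 := by nlinarith
    have hs1 : s^2 < 1 := by nlinarith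
    have hssx : 0 < √(1 - s^2) := Real.sqrt_pos.mpr (by linarith)
    have hPb := P_bounds K hx0 hx1 (sq_nonneg s) hss
    have hup : P (K+1) (s^2) ≤ 1 / √(1 - s^2) := by
      rw [le_div_iff₀ hssx]; exact hPb.2
    have hlow : (1 - ((K:ℝ)+1/2) * b K * (y^2) ^ K / √(1 - y^2)) / √(1 - s^2)
        ≤ P (K+1) (s^2) := by
      rw [div_le_iff₀ hssx]; exact hPb.1
    constructor
    · linarith
    · have hsv : √(1 - y^2) ≤ √(1 - s^2) := Real.sqrt_le_sqrt (by nlinarith)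
      have e1 : 1 / √(1 - s^2) - P (K+1) (s^2)
          ≤ (((K:ℝ)+1/2) * b K * (y^2) ^ K / √(1 - y^2)) / √(1 - s^2) := by
        have := hlow
        have h2 : 1 / √(1 - s^2) - (1 - ((K:ℝ)+1/2) * b K * (y^2) ^ K / √(1 - y^2)) / √(1 - s^2)
            = (((K:ℝ)+1/2) * b K * (y^2) ^ K / √(1 - y^2)) / √(1 - s^2) := by
          field_simp
          ring
        linarith
      have hnum0 : 0 ≤ ((K:ℝ)+1/2) * b K * (y^2) ^ K / √(1 - y^2) := by
        have := (b_pos K).le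
        positivity
      have e2 : (((K:ℝ)+1/2) * b K * (y^2) ^ K / √(1 - y^2)) / √(1 - s^2) ≤ M := by
        rw [hMdef]
        exact div_le_div_of_nonneg_left hnum0 hsx hsv
      linarith
  have hD := deriv_bound_aux hy0 hd (fun s hs => (hbnd s hs).1) (fun s hs => (hbnd s hs).2)
  rcases hD with ⟨h1, h2⟩
  rw [Real.arcsin_zero, Q_zero] at h1 h2
  norm_num at h1 h2
  constructor
  · linarith
  · have hMnn : 0 ≤ M := by
      have := (b_pos K).le
      rw [hMdef]; positivity
    have hMy : M * y ≤ M := by nlinarith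
    have hM2 : M = ((K:ℝ)+1/2) * b K * (y^2) ^ K / (1 - y^2) := by
      rw [hMdef, div_div, Real.mul_self_sqrt (by linarith)]
    linarith [hM2 ▸ hMy]

lemma hasSum_arcsin {y : ℝ} (hy0 : 0 ≤ y) (hy1 : y < 1) :
    HasSum (fun k => c k * y ^ (2*k+1)) (arcsin y) := by
  have hnn : ∀ k, 0 ≤ c k * y ^ (2*k+1) := by
    intro k; have := (c_pos k).le; positivity
  rw [hasSum_iff_tendsto_nat_of_nonneg hnn]
  have hQ : ∀ n : ℕ, ∑ i ∈ range n, c i * y ^ (2*i+1) = Q n y := fun n => rfl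
  have hx1 : y^2 < 1 := by nlinarith
  have hx0 : (0:ℝ) ≤ y^2 := sq_nonneg y
  have hden : 0 < 1 - y^2 := by linarith
  -- error term tends to zero
  have hE0 : Tendsto (fun K : ℕ => (((K:ℝ)+1) * (y^2) ^ K) / (1 - y^2)) atTop (𝓝 0) := by
    have h1 : Tendsto (fun K : ℕ => (K:ℝ) * (y^2) ^ K) atTop (𝓝 0) :=
      tendsto_self_mul_const_pow_of_lt_one hx0 hx1
    have h2 : Tendsto (fun K : ℕ => (y^2) ^ K) atTop (𝓝 0) :=
      tendsto_pow_atTop_nhds_zero_of_lt_one hx0 hx1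
    have h3 : Tendsto (fun K : ℕ => ((K:ℝ)+1) * (y^2) ^ K) atTop (𝓝 0) := by
      have := h1.add h2
      simpa [add_mul] using this
    simpa using h3.div_const (1 - y^2)
  have hsq : Tendsto (fun K : ℕ => arcsin y - Q (K+1) y) atTop (𝓝 0) := by
    apply squeeze_zero (fun K => (arcsin_est K hy0 hy1).1) ?_ hE0
    intro K
    refine le_trans (arcsin_est K hy0 hy1).2 ?_
    have hb := b_pos K
    have hb1 := b_le_one K
    have hp : (0:ℝ) ≤ (y^2)^K := by positivity
    have h5 : ((K:ℝ)+1/2) * b K ≤ (K:ℝ)+1 := by nlinarith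
    have hnum : ((K:ℝ)+1/2) * b K * (y^2)^K ≤ ((K:ℝ)+1) * (y^2)^K :=
      mul_le_mul_of_nonneg_right h5 hp
    exact (div_le_div_iff_of_pos_right hden).mpr hnum
  have hQs : Tendsto (fun K : ℕ => Q (K+1) y) atTop (𝓝 (arcsin y)) := by
    have := (tendsto_const_nhds (x := arcsin y) (f := atTop (α := ℕ))).sub hsq
    simpa using this
  have : Tendsto (fun K : ℕ => Q K y) atTop (𝓝 (arcsin y)) :=
    (tendsto_add_atTop_iff_nat 1).mp hQs
  simpa [hQ] using this

lemma sum_c_le (K : ℕ) : ∑ k ∈ range K, c k ≤ π/2 := by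
  have key : ∀ y : ℝ, 0 ≤ y → y < 1 → Q K y ≤ π/2 := by
    intro y hy0 hy1
    have hs := hasSum_arcsin hy0 hy1
    have h1 : Q K y ≤ arcsin y := by
      apply sum_le_hasSum (range K) _ hs
      intro k _
      have := (c_pos k).le
      positivity
    exact le_trans h1 (Real.arcsin_le_pi_div_two y)
  have hcont : ContinuousAt (fun y => Q K y) 1 := by
    apply Continuous.continuousAt
    unfold Q
    exact continuous_finset_sum _ fun k _ => continuous_const.mul (continuous_pow _)
  have hlim : Tendsto (fun y => Q K y) (nhdsWithin 1 (Set.Iio 1)) (𝓝 (Q K 1)) :=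
    hcont.continuousWithinAt.tendsto
  have hev : ∀ᶠ y in nhdsWithin (1:ℝ) (Set.Iio 1), Q K y ≤ π/2 := by
    filter_upwards [Ioo_mem_nhdsLT_of_mem (Set.right_mem_Ioc.mpr zero_lt_one)] with y hy
    exact key y hy.1.le hy.2
  have hQ1 : Q K 1 = ∑ k ∈ range K, c k := by
    unfold Q; apply Finset.sum_congr rfl; intro k _; simp
  rw [← hQ1]
  exact le_of_tendsto hlim hev

lemma summable_c : Summable c :=
  summable_of_sum_range_le (fun n => (c_pos n).le) sum_c_le

lemma tsum_c_le : ∑' k, c k ≤ π/2 :=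
  Real.tsum_le_of_sum_range_le (fun n => (c_pos n).le) sum_c_le

lemma hasSum_mul_arcsin {s : ℝ} (h : |s| < 1) :
    HasSum (fun k => c k * s^(2*k+2)) (s * arcsin s) := by
  have h1 := (hasSum_arcsin (abs_nonneg s) h).mul_left |s|
  have h2 : ∀ k, |s| * (c k * |s| ^ (2*k+1)) = c k * s^(2*k+2) := by
    intro k
    have habs : |s| ^ (2*k+2) = s ^ (2*k+2) := by
      rw [← abs_pow]
      exact abs_of_nonneg (Even.pow_nonneg ⟨k+1, by ring⟩ s)
    rw [show |s| * (c k * |s| ^ (2*k+1)) = c k * |s| ^ (2*k+2) from by ring, habs]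
  have h3 : |s| * arcsin |s| = s * arcsin s := by
    rcases abs_cases s with ⟨he, _⟩ | ⟨he, hneg⟩
    · rw [he]
    · rw [he, Real.arcsin_neg]; ring
  rw [← h3]
  simpa only [h2] using h1


lemma swap23 {N D : ℕ} (f : Fin N → Fin N → Fin D → ℝ) :
    ∑ i, ∑ j, ∑ l, f i j l = ∑ l, ∑ i, ∑ j, f i j l :=
  calc ∑ i, ∑ j, ∑ l, f i j l
      = ∑ i, ∑ l, ∑ j, f i j l := Finset.sum_congr rfl (fun i _ => Finset.sum_comm)
    _ = ∑ l, ∑ i, ∑ j, f i j l := Finset.sum_comm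

lemma qpow_nonneg {N D : ℕ} (u : Fin N → EuclideanSpace ℝ (Fin D)) :
    ∀ (m : ℕ) (a : Fin N → ℝ),
      0 ≤ ∑ i, ∑ j, a i * a j * (inner ℝ (u i) (u j) : ℝ) ^ m := by
  intro m
  induction m with
  | zero =>
    intro a
    simp only [pow_zero, mul_one]
    have : ∑ i, ∑ j, a i * a j = (∑ i, a i) * (∑ j, a j) := by
      rw [Finset.sum_mul_sum]
    rw [this]
    exact mul_self_nonneg _
  | succ m ih =>
    intro a
    have hsplit : ∀ i j : Fin N, (inner ℝ (u i) (u j) : ℝ) ^ (m+1)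
        = ∑ l, (u i l * u j l) * (inner ℝ (u i) (u j) : ℝ) ^ m := by
      intro i j
      rw [pow_succ, mul_comm ((inner ℝ (u i) (u j) : ℝ) ^ m)]
      have : (inner ℝ (u i) (u j) : ℝ) = ∑ l, u i l * u j l := by
        simp [PiLp.inner_apply, RCLike.inner_apply, mul_comm]
      rw [this, Finset.sum_mul]
    have e : ∑ i, ∑ j, a i * a j * (inner ℝ (u i) (u j) : ℝ) ^ (m+1)
        = ∑ l, ∑ i, ∑ j, (a i * u i l) * (a j * u j l) * (inner ℝ (u i) (u j) : ℝ) ^ m := by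
      rw [← swap23 (fun i j l => (a i * u i l) * (a j * u j l) * (inner ℝ (u i) (u j) : ℝ) ^ m)]
      apply Finset.sum_congr rfl
      intro i _
      apply Finset.sum_congr rfl
      intro j _
      rw [hsplit i j, Finset.mul_sum]
      apply Finset.sum_congr rfl
      intro l _
      ring
    rw [e]
    apply Finset.sum_nonneg
    intro l _
    exact ih (fun i => a i * u i l)


end NTKAux

open NTKAux

/-- The NTK Gram matrix of unit-norm (norm `√(d+1)`), pairwise non-parallel points
is symmetric positive definite. -/
theorem ntk_gram_posDef (d n : ℕ) (hd : 1 ≤ d)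
    (x : Fin n → EuclideanSpace ℝ (Fin (d + 1)))
    (hnorm : ∀ i, ‖x i‖ = Real.sqrt ((d : ℝ) + 1))
    (hpar : ∀ i j, i ≠ j → ∀ t : ℝ, x i ≠ t • x j)
    (H : Matrix (Fin n) (Fin n) ℝ)
    (hH : ∀ i j, H i j = (inner ℝ (x i) (x j) : ℝ) *
        (Real.pi - Real.arccos ((inner ℝ (x i) (x j) : ℝ) / ((d : ℝ) + 1))) / (2 * Real.pi)) :
    H.PosDef := by
  have hπ : 0 < π := Real.pi_pos
  have hD1pos : (0:ℝ) < (d:ℝ) + 1 := by positivity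
  set r : ℝ := Real.sqrt ((d:ℝ) + 1) with hrdef
  have hr : 0 < r := Real.sqrt_pos.mpr hD1pos
  have hr2 : r * r = (d:ℝ) + 1 := Real.mul_self_sqrt hD1pos.le
  set u : Fin n → EuclideanSpace ℝ (Fin (d+1)) := fun i => r⁻¹ • x i with hu
  have hxu : ∀ i, x i = r • u i := by
    intro i
    simp only [hu]
    rw [smul_smul, mul_inv_cancel₀ hr.ne', one_smul]
  have hnormu : ∀ i, ‖u i‖ = 1 := by
    intro i
    simp only [hu]
    simp only [norm_smul, norm_inv, Real.norm_eq_abs, abs_of_pos hr, hnorm i]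
    field_simp
  set t : Fin n → Fin n → ℝ := fun i j => (inner ℝ (u i) (u j) : ℝ) with htdef
  have hinner : ∀ i j, (inner ℝ (x i) (x j) : ℝ) = ((d:ℝ) + 1) * t i j := by
    intro i j
    have e1 : t i j = r⁻¹ * (r⁻¹ * (inner ℝ (x i) (x j) : ℝ)) := by
      simp only [htdef, hu]
      rw [real_inner_smul_left, real_inner_smul_right]
    rw [e1, ← hr2]
    field_simp
  have htii : ∀ i, t i i = 1 := by
    intro i
    simp only [htdef]
    rw [real_inner_self_eq_norm_sq, hnormu i, one_pow]
  have htabs : ∀ i j, i ≠ j → |t i j| < 1 := by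
    intro i j hij
    rw [abs_lt]
    constructor
    · have h1 : (inner ℝ (u i) (-u j) : ℝ) < 1 := by
        rw [inner_lt_one_iff_real_of_norm_eq_one (hnormu i) (by rw [norm_neg]; exact hnormu j)]
        intro he
        apply hpar i j hij (-1)
        rw [hxu i, he, smul_neg, ← hxu j, neg_one_smul]
      have h2 : (inner ℝ (u i) (-u j) : ℝ) = - t i j := by
        rw [inner_neg_right]
      rw [h2] at h1; linarith
    · have h1 : (inner ℝ (u i) (u j) : ℝ) < 1 := by
        rw [inner_lt_one_iff_real_of_norm_eq_one (hnormu i) (hnormu j)]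
        intro he
        apply hpar i j hij 1
        rw [hxu i, he, ← hxu j, one_smul]
      exact h1
  have hsym : ∀ i j, H i j = H j i := by
    intro i j
    rw [hH i j, hH j i, real_inner_comm (x j) (x i)]
  constructor
  · ext i j
    rw [Matrix.conjTranspose_apply, star_trivial, hsym j i]
  · intro a ha
    set C : ℝ := ∑' k, c k with hC
    set A : ℝ := ∑ i, a i ^ 2 with hA
    have hApos : 0 < A := by
      obtain ⟨i, hi⟩ := DFunLike.ne_iff.mp ha
      apply Finset.sum_pos' (fun j _ => sq_nonneg _)
      exact ⟨i, Finset.mem_univ i, lt_of_le_of_ne (sq_nonneg _) (Ne.symm (pow_ne_zero 2 hi))⟩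
    -- limit of power quadratic forms
    have hlim : Tendsto (fun K : ℕ => ∑ i, ∑ j, a i * a j * t i j ^ (2*K+2)) atTop
        (𝓝 (∑ i, ∑ j, (if i = j then a i * a j else 0))) := by
      apply tendsto_finset_sum
      intro i _
      apply tendsto_finset_sum
      intro j _
      by_cases hij : i = j
      · subst hij
        rw [if_pos rfl]
        have he : (fun K : ℕ => a i * a i * t i i ^ (2*K+2)) = fun _ : ℕ => a i * a i := by
          funext K
          rw [htii i, one_pow, mul_one]
        rw [he]
        exact tendsto_const_nhds
      · simp only [if_neg hij]
        have h3 : t i j ^ 2 < 1 := by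
          have h2 := htabs i j hij
          have := abs_nonneg (t i j)
          nlinarith [sq_abs (t i j)]
        have h4 : Tendsto (fun K : ℕ => (t i j ^ 2) ^ (K+1)) atTop (𝓝 0) :=
          (tendsto_pow_atTop_nhds_zero_of_lt_one (sq_nonneg _) h3).comp (tendsto_add_atTop_nat 1)
        have h5 : (fun K : ℕ => a i * a j * t i j ^ (2*K+2))
            = fun K : ℕ => a i * a j * (t i j ^ 2) ^ (K+1) := by
          funext K
          rw [← pow_mul]
          ring_nf
        rw [h5]
        simpa using h4.const_mul (a i * a j)
    have hdiagsum : ∑ i, ∑ j, (if i = j then a i * a j else 0) = A := by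
      rw [hA]
      apply Finset.sum_congr rfl
      intro i _
      rw [Finset.sum_ite_eq univ i (fun j => a i * a j), if_pos (Finset.mem_univ i)]
      ring
    rw [hdiagsum] at hlim
    obtain ⟨K₀, hK₀⟩ := (hlim.eventually_const_lt (show A/2 < A by linarith)).exists
    -- per-pair HasSum
    have hpair : ∀ i j, HasSum (fun k => a i * a j * (c k * t i j ^ (2*k+2)))
        (a i * a j * (if i = j then C else t i j * arcsin (t i j))) := by
      intro i j
      by_cases hij : i = j
      · subst hij
        simp only [htii i, one_pow, mul_one, if_pos rfl]
        exact summable_c.hasSum.mul_left (a i * a i)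
      · simp only [if_neg hij]
        exact (hasSum_mul_arcsin (htabs i j hij)).mul_left (a i * a j)
    have hsum : HasSum (fun k => ∑ i, ∑ j, a i * a j * (c k * t i j ^ (2*k+2)))
        (∑ i, ∑ j, a i * a j * (if i = j then C else t i j * arcsin (t i j))) :=
      hasSum_sum fun i _ => hasSum_sum fun j _ => hpair i j
    have hfactor : ∀ k, ∑ i, ∑ j, a i * a j * (c k * t i j ^ (2*k+2))
        = c k * ∑ i, ∑ j, a i * a j * t i j ^ (2*k+2) := by
      intro k
      rw [Finset.mul_sum]
      apply Finset.sum_congr rfl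
      intro i _
      rw [Finset.mul_sum]
      apply Finset.sum_congr rfl
      intro j _
      ring
    have hterm_nonneg : ∀ k, 0 ≤ ∑ i, ∑ j, a i * a j * (c k * t i j ^ (2*k+2)) := by
      intro k
      rw [hfactor k]
      exact mul_nonneg (c_pos k).le (qpow_nonneg u (2*k+2) a)
    have hK₀pos : 0 < ∑ i, ∑ j, a i * a j * (c K₀ * t i j ^ (2*K₀+2)) := by
      rw [hfactor K₀]
      exact mul_pos (c_pos K₀) (lt_trans (by positivity) hK₀)
    have hS_pos : 0 < ∑ i, ∑ j, a i * a j * (if i = j then C else t i j * arcsin (t i j)) :=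
      lt_of_lt_of_le hK₀pos (le_hasSum hsum K₀ (fun k _ => hterm_nonneg k))
    -- relate to full arcsin quadratic form
    have hrel : ∑ i, ∑ j, a i * a j * (t i j * arcsin (t i j))
        = (∑ i, ∑ j, a i * a j * (if i = j then C else t i j * arcsin (t i j)))
          + (π/2 - C) * A := by
      have h1 : ∀ i, ∑ j, (a i * a j * (t i j * arcsin (t i j))
          - a i * a j * (if i = j then C else t i j * arcsin (t i j)))
          = (π/2 - C) * a i ^ 2 := by
        intro i
        rw [Finset.sum_eq_single i]
        · rw [htii i, if_pos rfl, Real.arcsin_one]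
          ring
        · intro j _ hji
          rw [if_neg (fun h => hji h.symm)]
          ring
        · intro h; exact absurd (Finset.mem_univ i) h
      have h2 : ∑ i, ∑ j, a i * a j * (t i j * arcsin (t i j))
          = ∑ i, (∑ j, a i * a j * (if i = j then C else t i j * arcsin (t i j))
            + (π/2 - C) * a i ^ 2) := by
        apply Finset.sum_congr rfl
        intro i _
        rw [← h1 i, ← Finset.sum_add_distrib]
        apply Finset.sum_congr rfl
        intro j _
        ring
      rw [h2, Finset.sum_add_distrib, ← Finset.mul_sum, hA]
    have hCle : C ≤ π/2 := tsum_c_le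
    have hT : 0 < ∑ i, ∑ j, a i * a j * (t i j * arcsin (t i j)) := by
      rw [hrel]
      have : 0 ≤ (π/2 - C) * A := mul_nonneg (by linarith) hApos.le
      linarith
    have hQ1 : 0 ≤ ∑ i, ∑ j, a i * a j * t i j := by
      have h := qpow_nonneg u 1 a
      simpa [pow_one] using h
    -- final form
    have hform : dotProduct (star a) (H.mulVec a)
        = (((d:ℝ)+1)/(2*π)) * ((π/2) * (∑ i, ∑ j, a i * a j * t i j)
          + ∑ i, ∑ j, a i * a j * (t i j * arcsin (t i j))) := by
      rw [show star ⇑a = ⇑a from star_trivial _]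
      have e1 : dotProduct a (H.mulVec a) = ∑ i, ∑ j, a i * (H i j * a j) := by
        simp only [dotProduct, Matrix.mulVec, Finset.mul_sum]
      rw [e1]
      have e2 : ∀ i j, a i * (H i j * a j)
          = (((d:ℝ)+1)/(2*π)) * ((π/2) * (a i * a j * t i j)
            + a i * a j * (t i j * arcsin (t i j))) := by
        intro i j
        rw [hH i j, hinner i j]
        have harg : ((d:ℝ) + 1) * t i j / ((d:ℝ)+1) = t i j := by field_simp
        rw [harg, Real.arccos_eq_pi_div_two_sub_arcsin]
        field_simp
        ring
      calc ∑ i, ∑ j, a i * (H i j * a j)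
          = ∑ i, ∑ j, (((d:ℝ)+1)/(2*π)) * ((π/2) * (a i * a j * t i j)
            + a i * a j * (t i j * arcsin (t i j))) := by
            apply Finset.sum_congr rfl
            intro i _
            apply Finset.sum_congr rfl
            intro j _
            exact e2 i j
        _ = (((d:ℝ)+1)/(2*π)) * ((π/2) * (∑ i, ∑ j, a i * a j * t i j)
            + ∑ i, ∑ j, a i * a j * (t i j * arcsin (t i j))) := by
            rw [mul_add]
            simp only [Finset.mul_sum]
            rw [← Finset.sum_add_distrib]
            apply Finset.sum_congr rfl
            intro i _
            rw [← Finset.sum_add_distrib]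
            apply Finset.sum_congr rfl
            intro j _
            ring
    have hsumeq : (a.sum fun i xi => a.sum fun j xj => star xi * H i j * xj)
        = dotProduct (star ⇑a) (H.mulVec ⇑a) := by
      simp [dotProduct, Matrix.mulVec, Finsupp.sum_fintype, Finset.mul_sum, mul_assoc]
    rw [hsumeq, hform]
    apply mul_pos (div_pos hD1pos (by positivity))
    have h6 : 0 ≤ (π/2) * (∑ i, ∑ j, a i * a j * t i j) :=
      mul_nonneg (by linarith) hQ1
    linarith
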